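/- Let a₀, a₁, a₂, a₃ ∈ ℝ³ satisfy |a₀| = |a₂| = 1, a₀·a₁ = a₀·a₂ = a₂·a₃ = 0, and a₀·a₃ = −a₁·a₂. Set f = (a₂ × a₃)·a₀ and g = (a₀ × a₁)·a₂. Then a₀ × a₁ + f a₀ = a₂ × a₃ + g a₂. -/

import Mathlib

open Matrix

/-- Euclidean norm of a vector in `ℝ³`. -/
noncomputable def n3 (a : Fin 3 → ℝ) : ℝ := Real.sqrt (a ⬝ᵥ a)

/-- For `(a₀,a₁,a₂,a₃)` on `US²_{D₂}`, with `f = (a₂×a₃)·a₀` and `g = (a₀×a₁)·a₂`,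
the two base curves coincide: `a₀×a₁ + f a₀ = a₂×a₃ + g a₂`. -/
theorem common_base_curve (a0 a1 a2 a3 : Fin 3 → ℝ)
    (h0 : n3 a0 = 1) (h2 : n3 a2 = 1)
    (h01 : a0 ⬝ᵥ a1 = 0) (h02 : a0 ⬝ᵥ a2 = 0) (h23 : a2 ⬝ᵥ a3 = 0)
    (h03 : a0 ⬝ᵥ a3 = -(a1 ⬝ᵥ a2)) :
    a0 ⨯₃ a1 + ((a2 ⨯₃ a3) ⬝ᵥ a0) • a0 = a2 ⨯₃ a3 + ((a0 ⨯₃ a1) ⬝ᵥ a2) • a2 := by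
  rw [n3, Real.sqrt_eq_one] at h0 h2
  simp only [dotProduct, Fin.sum_univ_three] at h0 h2 h01 h02 h23 h03
  funext i
  fin_cases i <;>
    simp only [Pi.add_apply, Pi.smul_apply, smul_eq_mul, crossProduct, dotProduct,
      Fin.sum_univ_three, LinearMap.mk₂_apply, Fin.zero_eta, Fin.mk_one, Fin.reduceFinMk,
      cons_val_zero, cons_val_one, head_cons, cons_val_two, tail_cons, Fin.isValue]
  · linear_combination ((a1 0 * a2 0 + a1 1 * a2 1 + a1 2 * a2 2) * h0 + (a0 0 * a3 0 + a0 1 * a3 1 + a0 2 * a3 2) * h2 - (a0 0 * a2 0 + a0 1 * a2 1 + a0 2 * a2 2) * h01 - (a0 0 * a2 0 + a0 1 * a2 1 + a0 2 * a2 2) * h23 + h03) * (a0 1 * a2 2 - a0 2 * a2 1) + (((a2 1 * a3 2 - a2 2 * a3 1) * a0 0 + (a2 2 * a3 0 - a2 0 * a3 2) * a0 1 + (a2 0 * a3 1 - a2 1 * a3 0) * a0 2) * h02 - ((a0 1 * a1 2 - a0 2 * a1 1) * a2 0 + (a0 2 * a1 0 - a0 0 * a1 2) * a2 1 + (a0 0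 * a1 1 - a0 1 * a1 0) * a2 2) * h2) * (a2 0 * (a0 0 * a0 0 + a0 1 * a0 1 + a0 2 * a0 2) - a0 0 * (a0 0 * a2 0 + a0 1 * a2 1 + a0 2 * a2 2)) - (((a2 1 * a3 2 - a2 2 * a3 1) * a0 0 + (a2 2 * a3 0 - a2 0 * a3 2) * a0 1 + (a2 0 * a3 1 - a2 1 * a3 0) * a0 2) * h0 - ((a0 1 * a1 2 - a0 2 * a1 1) * a2 0 + (a0 2 * a1 0 - a0 0 * a1 2) * a2 1 + (a0 0 * a1 1 - a0 1 * a1 0) * a2 2) * h02) * (a2 0 * (a0 0 * a2 0 + a0 1 * a2 1 + a0 2 * a2 2) - a0 0 * (a2 0 * a2 0 + a2 1 * a2 1 + a2 2 * a2 2)) - ((a2 0 * a2 0 + a2 1 * a2 1 + a2 2 * a2 2) * h0 + h2 - (a0 0 * a2 0 + a0 1 * a2 1 + a0 2 * a2 2) * h02) * ((a0 1 * a1 2 - a0 2 * a1 1) + ((a2 1 * a3 2 - a2 2 * a3 1) * a0 0 + (a2 2 * a3 0 - a2 0 * a3 2) * a0 1 + (a2 0 * a3 1 - a2 1 * a3 0)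 * a0 2) * a0 0 - (a2 1 * a3 2 - a2 2 * a3 1) - ((a0 1 * a1 2 - a0 2 * a1 1) * a2 0 + (a0 2 * a1 0 - a0 0 * a1 2) * a2 1 + (a0 0 * a1 1 - a0 1 * a1 0) * a2 2) * a2 0)
  · linear_combination ((a1 0 * a2 0 + a1 1 * a2 1 + a1 2 * a2 2) * h0 + (a0 0 * a3 0 + a0 1 * a3 1 + a0 2 * a3 2) * h2 - (a0 0 * a2 0 + a0 1 * a2 1 + a0 2 * a2 2) * h01 - (a0 0 * a2 0 + a0 1 * a2 1 + a0 2 * a2 2) * h23 + h03) * (a0 2 * a2 0 - a0 0 * a2 2) + (((a2 1 * a3 2 - a2 2 * a3 1) * a0 0 + (a2 2 * a3 0 - a2 0 * a3 2) * a0 1 + (a2 0 * a3 1 - a2 1 * a3 0) * a0 2) * h02 - ((a0 1 * a1 2 - a0 2 * a1 1) * a2 0 + (a0 2 * a1 0 - a0 0 * a1 2) * a2 1 + (a0 0 * a1 1 - a0 1 * a1 0) * a2 2) * h2) * (a2 1 * (a0 0 * a0 0 + a0 1 * a0 1 + a0 2 * a0 2) - a0 1 * (a0 0 * a2 0 + a0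 1 * a2 1 + a0 2 * a2 2)) - (((a2 1 * a3 2 - a2 2 * a3 1) * a0 0 + (a2 2 * a3 0 - a2 0 * a3 2) * a0 1 + (a2 0 * a3 1 - a2 1 * a3 0) * a0 2) * h0 - ((a0 1 * a1 2 - a0 2 * a1 1) * a2 0 + (a0 2 * a1 0 - a0 0 * a1 2) * a2 1 + (a0 0 * a1 1 - a0 1 * a1 0) * a2 2) * h02) * (a2 1 * (a0 0 * a2 0 + a0 1 * a2 1 + a0 2 * a2 2) - a0 1 * (a2 0 * a2 0 + a2 1 * a2 1 + a2 2 * a2 2)) - ((a2 0 * a2 0 + a2 1 * a2 1 + a2 2 * a2 2) * h0 + h2 - (a0 0 * a2 0 + a0 1 * a2 1 + a0 2 * a2 2) * h02) * ((a0 2 * a1 0 - a0 0 * a1 2) + ((a2 1 * a3 2 - a2 2 * a3 1) * a0 0 + (a2 2 * a3 0 - a2 0 * a3 2) * a0 1 + (a2 0 * a3 1 - a2 1 * a3 0) * a0 2) * a0 1 - (a2 2 * a3 0 - a2 0 * a3 2) - ((a0 1 * a1 2 - a0 2 * a1 1) * a2 0 + (a0 2 * a1 0 - a0 0 * a1 2)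 * a2 1 + (a0 0 * a1 1 - a0 1 * a1 0) * a2 2) * a2 1)
  · linear_combination ((a1 0 * a2 0 + a1 1 * a2 1 + a1 2 * a2 2) * h0 + (a0 0 * a3 0 + a0 1 * a3 1 + a0 2 * a3 2) * h2 - (a0 0 * a2 0 + a0 1 * a2 1 + a0 2 * a2 2) * h01 - (a0 0 * a2 0 + a0 1 * a2 1 + a0 2 * a2 2) * h23 + h03) * (a0 0 * a2 1 - a0 1 * a2 0) + (((a2 1 * a3 2 - a2 2 * a3 1) * a0 0 + (a2 2 * a3 0 - a2 0 * a3 2) * a0 1 + (a2 0 * a3 1 - a2 1 * a3 0) * a0 2) * h02 - ((a0 1 * a1 2 - a0 2 * a1 1) * a2 0 + (a0 2 * a1 0 - a0 0 * a1 2) * a2 1 + (a0 0 * a1 1 - a0 1 * a1 0) * a2 2) * h2) * (a2 2 * (a0 0 * a0 0 + a0 1 * a0 1 + a0 2 * a0 2) - a0 2 * (a0 0 * a2 0 + a0 1 * a2 1 + a0 2 * a2 2)) - (((a2 1 * a3 2 - a2 2 * a3 1) * a0 0 + (a2 2 * a3 0 - a2 0 * a3 2) * a0 1 + (a2 0 *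 a3 1 - a2 1 * a3 0) * a0 2) * h0 - ((a0 1 * a1 2 - a0 2 * a1 1) * a2 0 + (a0 2 * a1 0 - a0 0 * a1 2) * a2 1 + (a0 0 * a1 1 - a0 1 * a1 0) * a2 2) * h02) * (a2 2 * (a0 0 * a2 0 + a0 1 * a2 1 + a0 2 * a2 2) - a0 2 * (a2 0 * a2 0 + a2 1 * a2 1 + a2 2 * a2 2)) - ((a2 0 * a2 0 + a2 1 * a2 1 + a2 2 * a2 2) * h0 + h2 - (a0 0 * a2 0 + a0 1 * a2 1 + a0 2 * a2 2) * h02) * ((a0 0 * a1 1 - a0 1 * a1 0) + ((a2 1 * a3 2 - a2 2 * a3 1) * a0 0 + (a2 2 * a3 0 - a2 0 * a3 2) * a0 1 + (a2 0 * a3 1 - a2 1 * a3 0) * a0 2) * a0 2 - (a2 0 * a3 1 - a2 1 * a3 0) - ((a0 1 * a1 2 - a0 2 * a1 1) * a2 0 + (a0 2 * a1 0 - a0 0 * a1 2) * a2 1 + (a0 0 * a1 1 - a0 1 * a1 0) * a2 2) * a2 2)
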